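/- arXiv:0809.1179 — 5 statements merged into one kernel-verified Lean document; each statement's English description precedes it below -/
import Mathlib

section
/- For every k ≥ 3 and every n ≥ 1, in the Tower of Hanoi graph H_n^k every vertex that is not a perfect state (i.e., is not a constant function) has degree at least 2k − 3; in particular, its degree is strictly greater than k − 1. -/
/-- The Tower of Hanoi graph `H_n^k`: vertices are functions `Fin n → Fin k`
(disk `i` lies on peg `v i`; smaller indices are smaller disks); two states are
adjacent iff they differ by one legal move of a single disk `d`: the position of
`d` changes, all other disks stay, and no smaller disk lies on the source peg or
the target peg of `d`. -/
def hanoiGraph (n k : ℕ) : SimpleGraph (Fin n → Fin k) where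
  Adj v w := ∃ d : Fin n, v d ≠ w d ∧ (∀ i : Fin n, i ≠ d → v i = w i) ∧
    (∀ i : Fin n, i < d → v i ≠ v d ∧ v i ≠ w d)
  symm := by
    constructor
    rintro v w ⟨d, h1, h2, h3⟩
    refine ⟨d, h1.symm, fun i hi => (h2 i hi).symm, fun i hi => ?_⟩
    have he : v i = w i := h2 i (ne_of_lt hi)
    have h := h3 i hi
    exact ⟨he ▸ h.2, he ▸ h.1⟩
  loopless := by constructor; rintro v ⟨d, h1, -⟩; exact h1 rfl

attribute [local instance] Classical.propDecidable

/-- In the Tower of Hanoi graph `H_n^k` (k ≥ 3, n ≥ 1), every vertex that is not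
a perfect state (not a constant function) has degree at least `2k - 3`; in
particular its degree is strictly greater than `k - 1`. -/
theorem hanoi_degree_non_perfect_state (n k : ℕ) (hk : 3 ≤ k) (hn : 1 ≤ n)
    (v : Fin n → Fin k) (hv : ∀ c : Fin k, v ≠ fun _ => c) :
    2 * k - 3 ≤ (hanoiGraph n k).degree v ∧ k - 1 < (hanoiGraph n k).degree v := by
  classical
  have hn0 : 0 < n := hn
  set z : Fin n := ⟨0, hn0⟩ with hzdef
  have hne : ∃ i, v i ≠ v z := by
    by_contra h
    push_neg at h
    exact hv (v z) (funext h)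
  have hP : ∃ m, ∃ h : m < n, v ⟨m, h⟩ ≠ v z := by
    obtain ⟨i, hi⟩ := hne
    exact ⟨i.1, i.2, by simpa using hi⟩
  obtain ⟨hmn, hmd⟩ := Nat.find_spec hP
  set d : Fin n := ⟨Nat.find hP, hmn⟩ with hddef
  have hdz : v d ≠ v z := hmd
  have hzd : z ≠ d := fun h => hdz (by rw [← h])
  have hmin : ∀ i : Fin n, i < d → v i = v z := by
    intro i hi
    by_contra h
    exact Nat.find_min hP (by exact_mod_cast hi) ⟨i.2, by simpa using h⟩
  -- the two families of neighbors
  set A : Finset (Fin n → Fin k) :=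
    (Finset.univ.erase (v z)).image (fun c => Function.update v z c) with hAdef
  set B : Finset (Fin n → Fin k) :=
    ((Finset.univ.erase (v z)).erase (v d)).image (fun c => Function.update v d c) with hBdef
  have hAsub : A ⊆ (hanoiGraph n k).neighborFinset v := by
    intro x hx
    rw [hAdef, Finset.mem_image] at hx
    obtain ⟨c, hc, rfl⟩ := hx
    rw [Finset.mem_erase] at hc
    rw [SimpleGraph.mem_neighborFinset]
    refine ⟨z, ?_, ?_, ?_⟩
    · rw [Function.update_self]; exact fun h => hc.1 h.symm
    · intro i hi; rw [Function.update_of_ne hi]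
    · intro i hi
      exact absurd hi (by simp [hzdef, Fin.lt_def])
  have hBsub : B ⊆ (hanoiGraph n k).neighborFinset v := by
    intro x hx
    rw [hBdef, Finset.mem_image] at hx
    obtain ⟨c, hc, rfl⟩ := hx
    rw [Finset.mem_erase, Finset.mem_erase] at hc
    obtain ⟨hcd, hcz, -⟩ := hc
    rw [SimpleGraph.mem_neighborFinset]
    refine ⟨d, ?_, ?_, ?_⟩
    · rw [Function.update_self]; exact fun h => hcd h.symm
    · intro i hi; rw [Function.update_of_ne hi]
    · intro i hi
      have hiz := hmin i hi
      rw [Function.update_self, hiz]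
      exact ⟨fun h => hdz h.symm, fun h => hcz h.symm⟩
  have hAcard : A.card = k - 1 := by
    rw [hAdef, Finset.card_image_of_injective _
      (fun a b h => by simpa using congrFun h z)]
    rw [Finset.card_erase_of_mem (Finset.mem_univ _), Finset.card_univ, Fintype.card_fin]
  have hBcard : B.card = k - 2 := by
    rw [hBdef, Finset.card_image_of_injective _
      (fun a b h => by simpa using congrFun h d)]
    rw [Finset.card_erase_of_mem (Finset.mem_erase.mpr ⟨hdz, Finset.mem_univ _⟩)]
    rw [Finset.card_erase_of_mem (Finset.mem_univ _), Finset.card_univ, Fintype.card_fin]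
    omega
  have hdisj : Disjoint A B := by
    rw [Finset.disjoint_left]
    intro x hxA hxB
    rw [hAdef, Finset.mem_image] at hxA
    rw [hBdef, Finset.mem_image] at hxB
    obtain ⟨a, ha, rfl⟩ := hxA
    obtain ⟨b, hb, heq⟩ := hxB
    rw [Finset.mem_erase, Finset.mem_erase] at hb
    have h1 : Function.update v z a d = v d := Function.update_of_ne (Ne.symm hzd) _ _
    have h2 : Function.update v d b d = b := Function.update_self _ _ _
    rw [heq] at h2
    exact hb.1 (h2.symm.trans h1)
  have hcard : (A ∪ B).card = 2 * k - 3 := by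
    rw [Finset.card_union_of_disjoint hdisj, hAcard, hBcard]
    omega
  have hle : 2 * k - 3 ≤ (hanoiGraph n k).degree v := by
    calc 2 * k - 3 = (A ∪ B).card := hcard.symm
    _ ≤ ((hanoiGraph n k).neighborFinset v).card :=
        Finset.card_le_card (Finset.union_subset hAsub hBsub)
    _ = (hanoiGraph n k).degree v := rfl
  exact ⟨hle, by omega⟩
end

section
/- For every k ≥ 3, every n ≥ 1, and every graph automorphism g of the Tower of Hanoi graph H_n^k, the automorphism g permutes the perfect states: for each peg i there exists a unique peg j such that g maps the perfect state \overline{i} to the perfect state \overline{j}. -/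
lemma hanoi_exists_third (k : ℕ) (hk : 3 ≤ k) (a b : Fin k) :
    ∃ q : Fin k, q ≠ a ∧ q ≠ b := by
  by_contra h
  push_neg at h
  have hsub : (Finset.univ : Finset (Fin k)) ⊆ {a, b} := by
    intro x _
    by_cases hx : x = a
    · simp [hx]
    · simp [h x hx]
  have hcard := Finset.card_le_card hsub
  simp only [Finset.card_univ, Fintype.card_fin] at hcard
  have h2 : ({a, b} : Finset (Fin k)).card ≤ 2 :=
    (Finset.card_insert_le _ _).trans (by simp)
  omega

/-- Neighbors of a perfect state are obtained by moving disk 0. -/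
lemma hanoi_adj_const {n k : ℕ} (hn : 1 ≤ n) (i : Fin k) (w : Fin n → Fin k)
    (h : (hanoiGraph n k).Adj (fun _ => i) w) :
    w ⟨0, hn⟩ ≠ i ∧ ∀ m, m ≠ ⟨0, hn⟩ → w m = i := by
  obtain ⟨d, h1, h2, h3⟩ := h
  have hd : d = ⟨0, hn⟩ := by
    by_contra hne
    have hv : d.1 ≠ 0 := fun h0 => hne (Fin.ext h0)
    have hlt : (⟨0, hn⟩ : Fin n) < d := by
      rw [Fin.lt_def]; exact Nat.pos_of_ne_zero hv
    exact (h3 _ hlt).1 rfl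
  subst hd
  exact ⟨fun hh => h1 hh.symm, fun m hm => (h2 m hm).symm⟩

/-- A non-perfect state has two distinct non-adjacent neighbors. -/
lemma hanoi_nonconst_bad {n k : ℕ} (hk : 3 ≤ k) (hn : 1 ≤ n) (v : Fin n → Fin k)
    (hv : ¬ ∃ c, v = fun _ => c) :
    ∃ w1 w2, (hanoiGraph n k).Adj v w1 ∧ (hanoiGraph n k).Adj v w2 ∧
      w1 ≠ w2 ∧ ¬ (hanoiGraph n k).Adj w1 w2 := by
  set z : Fin n := ⟨0, hn⟩ with hz
  have hex : ∃ t, ∃ (ht : t < n), v ⟨t, ht⟩ ≠ v z := by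
    by_contra h
    push_neg at h
    exact hv ⟨v z, funext fun m => h m.1 m.2⟩
  classical
  let t0 := Nat.find hex
  obtain ⟨ht0, hvd⟩ := Nat.find_spec hex
  set d : Fin n := ⟨t0, ht0⟩ with hdd
  have hmin : ∀ m : Fin n, m < d → v m = v z := by
    intro m hm
    by_contra hne
    exact Nat.find_min hex (by exact hm) ⟨m.2, by simpa using hne⟩
  have hdz : d ≠ z := fun h => hvd (by rw [h])
  obtain ⟨p, hp, -⟩ := hanoi_exists_third k hk (v z) (v z)
  obtain ⟨q, hq1, hq2⟩ := hanoi_exists_third k hk (v z) (v d)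
  refine ⟨Function.update v z p, Function.update v d q, ?_, ?_, ?_, ?_⟩
  · refine ⟨z, ?_, fun m hm => ?_, fun m hm => ?_⟩
    · rw [Function.update_self]; exact fun h => hp h.symm
    · rw [Function.update_of_ne hm]
    · exact absurd hm (by rw [Fin.lt_def]; exact Nat.not_lt_zero _)
  · refine ⟨d, ?_, fun m hm => ?_, fun m hm => ?_⟩
    · rw [Function.update_self]; exact fun h => hq2 h.symm
    · rw [Function.update_of_ne hm]
    · rw [Function.update_self]
      have := hmin m hm
      exact ⟨this ▸ fun h => hvd h.symm, this ▸ fun h => hq1 h.symm⟩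
  · intro h
    have h0 := congrFun h z
    rw [Function.update_self, Function.update_of_ne hdz.symm] at h0
    exact hp h0
  · rintro ⟨d', h1, h2, -⟩
    by_cases hd' : d' = z
    · subst hd'
      have := h2 d hdz
      rw [Function.update_of_ne hdz, Function.update_self] at this
      exact hq2 this.symm
    · have := h2 z (fun h => hd' h.symm)
      rw [Function.update_self, Function.update_of_ne hdz.symm] at this
      exact hp this

/-- Every automorphism of the Tower of Hanoi graph `H_n^k` (k ≥ 3, n ≥ 1)
permutes the perfect states: for each peg `i` there is a unique peg `j` with
`g(\overline{i}) = \overline{j}`. -/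
theorem hanoi_aut_permutes_perfect_states (n k : ℕ) (hk : 3 ≤ k) (hn : 1 ≤ n)
    (g : hanoiGraph n k ≃g hanoiGraph n k) (i : Fin k) :
    ∃! j : Fin k, g (fun _ => i) = fun _ => j := by
  set z : Fin n := ⟨0, hn⟩ with hz
  have key : ∃ c, (g fun _ => i) = fun _ => c := by
    by_contra hc
    obtain ⟨w1, w2, a1, a2, hne, hna⟩ := hanoi_nonconst_bad hk hn _ hc
    have b1 : (hanoiGraph n k).Adj (fun _ => i) (g.symm w1) := by
      rw [← g.map_adj_iff]
      simpa using a1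
    have b2 : (hanoiGraph n k).Adj (fun _ => i) (g.symm w2) := by
      rw [← g.map_adj_iff]
      simpa using a2
    obtain ⟨c1, C1⟩ := hanoi_adj_const hn i _ b1
    obtain ⟨c2, C2⟩ := hanoi_adj_const hn i _ b2
    have hsne : g.symm w1 ≠ g.symm w2 := fun h => hne (by
      have := congrArg g h; simpa using this)
    have hzz : g.symm w1 z ≠ g.symm w2 z := by
      intro heq
      apply hsne
      funext m
      by_cases hm : m = z
      · rw [hm]; exact heq
      · rw [C1 m hm, C2 m hm]
    have hadj : (hanoiGraph n k).Adj (g.symm w1) (g.symm w2) :=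
      ⟨z, hzz, fun m hm => by rw [C1 m hm, C2 m hm],
        fun m hm => absurd hm (by rw [Fin.lt_def]; exact Nat.not_lt_zero _)⟩
    apply hna
    have := g.map_adj_iff.mpr hadj
    simpa using this
  obtain ⟨c, hcc⟩ := key
  refine ⟨c, hcc, fun y hy => ?_⟩
  exact congrFun (hy.symm.trans hcc) z
end

section
/- For every k ≥ 3 and every n ≥ 1, if a vertex v of the Tower of Hanoi graph H_n^k lies in the substructure [i] (the largest disk of v lies on peg i), then the graph distance from v to the perfect state \overline{i} is strictly smaller than the graph distance from v to the perfect state \overline{j}, for every peg j ≠ i. -/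
namespace HanoiAux

variable {n k : ℕ}

/-- Appending the largest disk on a fixed peg is a graph homomorphism. -/
def snocHom (n k : ℕ) (p : Fin k) : hanoiGraph n k →g hanoiGraph (n + 1) k where
  toFun x := Fin.snoc x p
  map_rel' := by
    rintro x y ⟨d, h1, h2, h3⟩
    refine ⟨d.castSucc, ?_, ?_, ?_⟩
    · simpa [Fin.snoc_castSucc] using h1
    · intro m hm
      rcases Fin.eq_castSucc_or_eq_last m with ⟨m', rfl⟩ | rfl
      · have : m' ≠ d := fun h => hm (by rw [h])
        simpa [Fin.snoc_castSucc] using h2 m' this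
      · simp
    · intro m hm
      rcases Fin.eq_castSucc_or_eq_last m with ⟨m', rfl⟩ | rfl
      · have hm' : m' < d := by
          simpa [Fin.castSucc_lt_castSucc_iff] using hm
        simpa [Fin.snoc_castSucc] using h3 m' hm'
      · exact absurd hm (not_lt.mpr (le_of_lt (Fin.castSucc_lt_last d)))

/-- Relabelling the pegs by a permutation is a graph homomorphism. -/
def permHom (n k : ℕ) (σ : Equiv.Perm (Fin k)) : hanoiGraph n k →g hanoiGraph n k where
  toFun v := σ ∘ v
  map_rel' := by
    rintro v w ⟨d, h1, h2, h3⟩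
    refine ⟨d, fun h => h1 (σ.injective h), fun m hm => congrArg σ (h2 m hm),
      fun m hm => ⟨fun h => (h3 m hm).1 (σ.injective h),
        fun h => (h3 m hm).2 (σ.injective h)⟩⟩

lemma third_peg (hk : 3 ≤ k) (a b : Fin k) : ∃ c : Fin k, c ≠ a ∧ c ≠ b := by
  by_contra h
  push_neg at h
  have hsub : (Finset.univ : Finset (Fin k)) ⊆ {a, b} := by
    intro c _
    rcases eq_or_ne c a with hc | hc
    · simp [hc]
    · simp [h c hc]
  have h1 : k ≤ ({a, b} : Finset (Fin k)).card := by
    simpa using Finset.card_le_card hsub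
  have h2 : ({a, b} : Finset (Fin k)).card ≤ 2 := by
    apply le_trans (Finset.card_insert_le _ _)
    simp
  omega

/-- Moving the largest disk when all the smaller disks are on a third peg. -/
lemma big_move (a b c : Fin k) (hab : a ≠ b) (hca : c ≠ a) (hcb : c ≠ b) :
    (hanoiGraph (n + 1) k).Adj (Fin.snoc (fun _ => c) a) (Fin.snoc (fun _ => c) b) := by
  refine ⟨Fin.last n, by simpa using hab, ?_, ?_⟩
  · intro m hm
    rcases Fin.eq_castSucc_or_eq_last m with ⟨m', rfl⟩ | rfl
    · simp
    · exact absurd rfl hm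
  · intro m hm
    rcases Fin.eq_castSucc_or_eq_last m with ⟨m', rfl⟩ | rfl
    · simpa using ⟨hca, hcb⟩
    · exact absurd hm (lt_irrefl _)

lemma hanoi_reachable (hk : 3 ≤ k) :
    ∀ (n : ℕ) (v w : Fin n → Fin k), (hanoiGraph n k).Reachable v w := by
  intro n
  induction n with
  | zero =>
    intro v w
    have : v = w := funext fun m => m.elim0
    exact this ▸ SimpleGraph.Reachable.refl v
  | succ n ih =>
    intro v w
    have hv : Fin.snoc (Fin.init v) (v (Fin.last n)) = v := Fin.snoc_init_self v
    have hw : Fin.snoc (Fin.init w) (w (Fin.last n)) = w := Fin.snoc_init_self w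
    rcases eq_or_ne (v (Fin.last n)) (w (Fin.last n)) with hvw | hvw
    · have := (ih (Fin.init v) (Fin.init w)).map (snocHom n k (v (Fin.last n)))
      rw [show (snocHom n k (v (Fin.last n))) (Fin.init v) = v from hv] at this
      rw [show (snocHom n k (v (Fin.last n))) (Fin.init w)
          = Fin.snoc (Fin.init w) (v (Fin.last n)) from rfl, hvw, hw] at this
      exact this
    · obtain ⟨c, hca, hcb⟩ := third_peg hk (v (Fin.last n)) (w (Fin.last n))
      have r1 : (hanoiGraph (n + 1) k).Reachable v
          (Fin.snoc (fun _ => c) (v (Fin.last n))) := by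
        have := (ih (Fin.init v) (fun _ => c)).map (snocHom n k (v (Fin.last n)))
        rw [show (snocHom n k (v (Fin.last n))) (Fin.init v) = v from hv] at this
        exact this
      have r2 : (hanoiGraph (n + 1) k).Adj
          (Fin.snoc (fun _ => c) (v (Fin.last n)))
          (Fin.snoc (fun _ => c) (w (Fin.last n))) :=
        big_move _ _ _ hvw hca hcb
      have r3 : (hanoiGraph (n + 1) k).Reachable
          (Fin.snoc (fun _ => c) (w (Fin.last n))) w := by
        have := (ih (fun _ => c) (Fin.init w)).map (snocHom n k (w (Fin.last n)))
        rw [show (snocHom n k (w (Fin.last n))) (Fin.init w) = w from hw] at this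
        exact this
      exact (r1.trans r2.reachable).trans r3

/-- Key lemma: from any walk from `v ∈ [i]` to the perfect state `j̄ ≠ ī`,
one can construct a strictly shorter walk from `v` to `ī`. -/
lemma key : ∀ L : ℕ, ∀ (i j : Fin k) (v : Fin (n + 1) → Fin k),
    v (Fin.last n) = i → j ≠ i →
    ∀ W : (hanoiGraph (n + 1) k).Walk v (fun _ => j), W.length ≤ L →
    ∃ W' : (hanoiGraph (n + 1) k).Walk v (fun _ => i), W'.length < W.length := by
  intro L
  induction L with
  | zero =>
    intro i j v hv hj W hW
    exfalso
    have h0 : W.length = 0 := Nat.le_zero.mp hW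
    have : v = fun _ => j := W.eq_of_length_eq_zero h0
    exact hj (by rw [this] at hv; exact hv)
  | succ L ih =>
    intro i j v hv hj W hW
    cases W with
    | nil => exact absurd hv hj
    | @cons _ u _ h W' =>
      rcases eq_or_ne (u (Fin.last n)) i with hu | hu
      · obtain ⟨W'', hW''⟩ := ih i j u hu hj W' (by
          have : W'.length + 1 ≤ L + 1 := by
            simpa using hW
          omega)
        exact ⟨SimpleGraph.Walk.cons h W'', by
          simp only [SimpleGraph.Walk.length_cons]; omega⟩
      · -- the first move is the biggest disk, from peg i to peg p
        obtain ⟨d, h1, h2, h3⟩ := id h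
        have hd : d = Fin.last n := by
          by_contra hd
          exact hu ((h2 (Fin.last n) (fun e => hd e.symm)).symm.trans hv)
        subst hd
        set p := u (Fin.last n) with hp
        -- all small disks avoid pegs i and p, and are unchanged
        have hsmall : ∀ m : Fin n, v m.castSucc = u m.castSucc ∧
            v m.castSucc ≠ i ∧ v m.castSucc ≠ p := by
          intro m
          have hlt : m.castSucc < Fin.last n := Fin.castSucc_lt_last m
          have h3' := h3 m.castSucc hlt
          exact ⟨h2 m.castSucc (ne_of_lt hlt), hv ▸ h3'.1, h3'.2⟩
        set σ : Equiv.Perm (Fin k) := Equiv.swap i p with hσ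
        have hσu : (permHom (n + 1) k σ) u = v := by
          funext m
          rcases Fin.eq_castSucc_or_eq_last m with ⟨m', rfl⟩ | rfl
          · obtain ⟨he, hi', hp'⟩ := hsmall m'
            show σ (u m'.castSucc) = v m'.castSucc
            rw [← he, hσ, Equiv.swap_apply_of_ne_of_ne hi' hp']
          · show σ p = v (Fin.last n)
            rw [hv, hσ, Equiv.swap_apply_right]
        -- map the rest of the walk by the swap
        have hconst : (permHom (n + 1) k σ) (fun _ => j) = fun _ => σ j := rfl
        rcases eq_or_ne p j with hpj | hpj
        · -- the big disk moved directly to peg j : swap gives a walk to ī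
          have hσj : σ j = i := by rw [hσ, hpj, Equiv.swap_apply_right]
          refine ⟨(W'.map (permHom (n + 1) k σ)).copy hσu (by rw [hconst, hσj]), ?_⟩
          simp only [SimpleGraph.Walk.length_copy, SimpleGraph.Walk.length_map,
            SimpleGraph.Walk.length_cons]
          omega
        · -- otherwise the swap gives a shorter walk to j̄; recurse
          have hσj : σ j = j := by
            rw [hσ]
            exact Equiv.swap_apply_of_ne_of_ne hj (fun e => hpj e.symm)
          let M : (hanoiGraph (n + 1) k).Walk v (fun _ => j) :=
            (W'.map (permHom (n + 1) k σ)).copy hσu (by rw [hconst, hσj])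
          have hMlen : M.length = W'.length := by
            simp only [M, SimpleGraph.Walk.length_copy, SimpleGraph.Walk.length_map]
          obtain ⟨W'', hW''⟩ := ih i j v hv hj M (by
            rw [hMlen]
            have : W'.length + 1 ≤ L + 1 := by simpa using hW
            omega)
          exact ⟨W'', by
            rw [hMlen] at hW''
            simp only [SimpleGraph.Walk.length_cons]; omega⟩

end HanoiAux

/-- If a vertex `v` of `H_n^k` lies in the substructure `[i]` (its largest disk
lies on peg `i`), then `v` is strictly closer to the perfect state `\overline{i}`
than to any other perfect state `\overline{j}`. -/
theorem hanoi_dist_to_own_perfect_state_lt (n k : ℕ) (hk : 3 ≤ k) (hn : 1 ≤ n)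
    (i : Fin k) (v : Fin n → Fin k) (hv : v ⟨n - 1, by omega⟩ = i)
    (j : Fin k) (hj : j ≠ i) :
    (hanoiGraph n k).dist v (fun _ => i) < (hanoiGraph n k).dist v (fun _ => j) := by
  obtain ⟨m, rfl⟩ : ∃ m, n = m + 1 := ⟨n - 1, by omega⟩
  have hv' : v (Fin.last m) = i := hv
  have hreach : (hanoiGraph (m + 1) k).Reachable v (fun _ => j) :=
    HanoiAux.hanoi_reachable hk (m + 1) v _
  obtain ⟨W, hW⟩ := hreach.exists_walk_length_eq_dist
  obtain ⟨W', hW'⟩ := HanoiAux.key W.length i j v hv' hj W le_rfl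
  calc (hanoiGraph (m + 1) k).dist v (fun _ => i) ≤ W'.length :=
        SimpleGraph.dist_le W'
    _ < W.length := hW'
    _ = (hanoiGraph (m + 1) k).dist v (fun _ => j) := hW
end

section
/- Let k ≥ 3, n ≥ 2, and let i ≠ j be pegs. Consider the vertex u of the Tower of Hanoi graph H_n^k with u(n−1) = i and u(d) = j for all d < n−1 (the largest disk on peg i, all other disks stacked on peg j). Then u is not adjacent to any vertex of the substructure [j], while for every peg l ≠ j the vertex u is adjacent to some vertex of the substructure [l]. -/
/-- Let `u` be the vertex of `H_n^k` (n ≥ 2) whose largest disk lies on peg `i`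
and all other disks are stacked on peg `j ≠ i`. Then `u` is not adjacent to any
vertex of the substructure `[j]`, while for every peg `l ≠ j` it is adjacent to
some vertex of `[l]`. -/
theorem hanoi_adjacency_of_special_vertex (n k : ℕ) (hk : 3 ≤ k) (hn : 2 ≤ n)
    (i j : Fin k) (hij : i ≠ j)
    (u : Fin n → Fin k) (hu1 : u ⟨n - 1, by omega⟩ = i)
    (hu2 : ∀ d : Fin n, (d : ℕ) < n - 1 → u d = j) :
    (∀ w : Fin n → Fin k, (hanoiGraph n k).Adj u w → w ⟨n - 1, by omega⟩ ≠ j) ∧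
    (∀ l : Fin k, l ≠ j →
      ∃ w : Fin n → Fin k, (hanoiGraph n k).Adj u w ∧ w ⟨n - 1, by omega⟩ = l) := by
  have hn1 : 0 < n := by omega
  set N : Fin n := ⟨n - 1, by omega⟩ with hN
  set Z : Fin n := ⟨0, by omega⟩ with hZ
  have hZN : (Z : ℕ) < (N : ℕ) := by simp [hZ, hN]; omega
  have huZ : u Z = j := hu2 Z (by simp [hZ]; omega)
  constructor
  · rintro w ⟨d, h1, h2, h3⟩ hwj
    by_cases hd : d = N
    · subst hd
      have := (h3 Z (by exact hZN)).2
      rw [huZ, hwj] at this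
      exact this rfl
    · have := h2 N (fun h => hd h.symm)
      rw [hu1] at this
      exact hij (this.trans hwj)
  · intro l hl
    by_cases hli : l = i
    · -- move the smallest disk to a third peg
      have : ∃ m : Fin k, m ≠ i ∧ m ≠ j := by
        have hne : ({i, j} : Finset (Fin k)) ≠ Finset.univ := by
          intro h
          have hc : ({i, j} : Finset (Fin k)).card ≤ 2 := Finset.card_insert_le _ _ |>.trans (by simp)
          rw [h, Finset.card_univ, Fintype.card_fin] at hc
          omega
        have : ∃ m, m ∉ ({i, j} : Finset (Fin k)) := by
          by_contra hc
          push_neg at hc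
          exact hne (Finset.eq_univ_of_forall hc)
        obtain ⟨m, hm⟩ := this
        simp only [Finset.mem_insert, Finset.mem_singleton, not_or] at hm
        exact ⟨m, hm.1, hm.2⟩
      obtain ⟨m, hmi, hmj⟩ := this
      refine ⟨Function.update u Z m, ⟨Z, ?_, ?_, ?_⟩, ?_⟩
      · rw [Function.update_self, huZ]; exact fun h => hmj h.symm
      · intro x hx; rw [Function.update_of_ne hx]
      · intro x hx; exact absurd hx (by simp [hZ, Fin.lt_def])
      · rw [Function.update_of_ne (by exact fun h => by simp [hZ, hN, Fin.ext_iff] at h; omega), hu1, hli]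
    · -- move the largest disk to peg l
      refine ⟨Function.update u N l, ⟨N, ?_, ?_, ?_⟩, ?_⟩
      · rw [Function.update_self, hu1]; exact fun h => hli h.symm
      · intro x hx; rw [Function.update_of_ne hx]
      · intro x hx
        have hx' : (x : ℕ) < n - 1 := by simpa [hN, Fin.lt_def] using hx
        rw [hu2 x hx', hu1, Function.update_self]
        exact ⟨fun h => hij h.symm, fun h => hl h.symm⟩
      · exact Function.update_self _ _ _
end

section
/- Let k ≥ 3 and n ≥ 1. If a graph automorphism g of the Tower of Hanoi graph H_n^k fixes every perfect state, i.e., g(\overline{i}) = \overline{i} for all pegs i ∈ {0, …, k−1}, then g is the identity automorphism. -/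
namespace HanoiAux

variable {k : ℕ}

lemma hanoi_adj {n : ℕ} {v w : Fin n → Fin k} :
    (hanoiGraph n k).Adj v w ↔ ∃ d : Fin n, v d ≠ w d ∧ (∀ i : Fin n, i ≠ d → v i = w i) ∧
      (∀ i : Fin n, i < d → v i ≠ v d ∧ v i ≠ w d) := Iff.rfl

lemma exists_ne_ne (hk : 3 ≤ k) (p q : Fin k) : ∃ x : Fin k, x ≠ p ∧ x ≠ q := by
  by_contra h
  push_neg at h
  have hsub : (Finset.univ : Finset (Fin k)) ⊆ {p, q} := by
    intro x _
    rcases eq_or_ne x p with h1 | h1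
    · simp [h1]
    · simp [h x h1]
  have h1 := Finset.card_le_card hsub
  have h2 := Finset.card_insert_le p ({q} : Finset (Fin k))
  simp [Finset.card_univ] at h1 h2
  omega

/-- Two states agree off disk 0 iff they are equal or lie in a common `k`-clique. -/
lemma tail_eq_iff (hk : 3 ≤ k) {n : ℕ} (v w : Fin (n+1) → Fin k) :
    Fin.tail v = Fin.tail w ↔ v = w ∨ ∃ t : Finset (Fin (n+1) → Fin k),
      t.card = k ∧ (∀ a ∈ t, ∀ b ∈ t, a ≠ b → (hanoiGraph (n+1) k).Adj a b) ∧
      v ∈ t ∧ w ∈ t := by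
  constructor
  · intro h
    rcases eq_or_ne v w with rfl | hvw
    · exact Or.inl rfl
    refine Or.inr ⟨Finset.image (fun p => Fin.cons p (Fin.tail v)) Finset.univ, ?_, ?_, ?_, ?_⟩
    · rw [Finset.card_image_of_injective _ (fun p q hpq => by simpa using congrFun hpq 0),
        Finset.card_univ, Fintype.card_fin]
    · rintro a ha b hb hab
      simp only [Finset.mem_image, Finset.mem_univ, true_and] at ha hb
      obtain ⟨p, rfl⟩ := ha; obtain ⟨q, rfl⟩ := hb
      have hpq : p ≠ q := fun hh => hab (by rw [hh])
      refine ⟨0, by simpa using hpq, ?_, fun i hi => absurd hi (Fin.not_lt_zero i)⟩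
      intro i hi
      induction i using Fin.cases with
      | zero => exact absurd rfl hi
      | succ j => simp
    · exact Finset.mem_image.2 ⟨v 0, Finset.mem_univ _, Fin.cons_self_tail v⟩
    · exact Finset.mem_image.2 ⟨w 0, Finset.mem_univ _, by rw [h]; exact Fin.cons_self_tail w⟩
  · rintro (rfl | ⟨t, hcard, hclique, hv, hw⟩)
    · rfl
    rcases eq_or_ne v w with rfl | hvw
    · rfl
    obtain ⟨d, hd1, hd2, hd3⟩ := hclique v hv w hw hvw
    have hd0 : d = 0 := by
      by_contra hd0
      have hpos : (0 : Fin (n+1)) < d := Fin.pos_of_ne_zero hd0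
      -- every element of the clique differs from `v` exactly at disk `d`
      have step1 : ∀ s ∈ t, s ≠ v → v d ≠ s d ∧ (∀ i, i ≠ d → v i = s i) ∧
          (∀ i : Fin (n+1), i < d → v i ≠ v d ∧ v i ≠ s d) := by
        intro s hs hsv
        rcases eq_or_ne s w with rfl | hsw
        · exact ⟨hd1, hd2, hd3⟩
        obtain ⟨e, he1, he2, he3⟩ := hclique v hv s hs (fun hh => hsv hh.symm)
        obtain ⟨f, hf1, hf2, hf3⟩ := hclique w hw s hs (fun hh => hsw hh.symm)
        have hed : e = d := by
          rcases eq_or_ne e f with rfl | hef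
          · by_contra hed
            apply hd1
            rw [he2 d (fun hh => hed hh.symm), hf2 d (fun hh => hed hh.symm)]
          · have hve : v e ≠ w e := by
              rw [hf2 e hef]; exact he1
            by_contra hed
            exact hve (hd2 e hed)
        subst hed
        exact ⟨he1, he2, he3⟩
      have hv0d : v 0 ≠ v d := (hd3 0 hpos).1
      have himg : Finset.image (fun s => s d) t = Finset.univ := by
        apply Finset.eq_univ_of_card
        rw [Finset.card_image_of_injOn, hcard, Fintype.card_fin]
        intro s hs s' hs' hss
        have key : ∀ x ∈ t, ∀ i, i ≠ d → x i = v i := by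
          intro x hx i hid
          rcases eq_or_ne x v with rfl | hxv
          · rfl
          · exact ((step1 x hx hxv).2.1 i hid).symm
        funext i
        rcases eq_or_ne i d with rfl | hid
        · exact hss
        · rw [key s hs i hid, key s' hs' i hid]
      have hmem : v 0 ∈ Finset.image (fun s => s d) t := himg ▸ Finset.mem_univ _
      obtain ⟨s, hs, hsd⟩ := Finset.mem_image.1 hmem
      rcases eq_or_ne s v with rfl | hsv
      · exact hv0d hsd.symm
      · exact ((step1 s hs hsv).2.2 0 hpos).2 hsd.symm
    subst hd0
    funext i
    exact hd2 i.succ (Fin.succ_ne_zero i)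

/-- An automorphism preserves the "agree off disk 0" relation. -/
lemma tail_eq_map (hk : 3 ≤ k) {n : ℕ} (g : hanoiGraph (n+1) k ≃g hanoiGraph (n+1) k)
    {v w : Fin (n+1) → Fin k} (h : Fin.tail v = Fin.tail w) :
    Fin.tail (g v) = Fin.tail (g w) := by
  rw [tail_eq_iff hk] at h ⊢
  rcases h with rfl | ⟨t, hcard, hadj, hv, hw⟩
  · exact Or.inl rfl
  refine Or.inr ⟨t.image g, ?_, ?_, Finset.mem_image_of_mem _ hv, Finset.mem_image_of_mem _ hw⟩
  · rw [Finset.card_image_of_injective _ g.injective]; exact hcard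
  · rintro a ha b hb hab
    simp only [Finset.mem_image] at ha hb
    obtain ⟨a', ha', rfl⟩ := ha; obtain ⟨b', hb', rfl⟩ := hb
    exact g.map_rel_iff.2 (hadj a' ha' b' hb' (fun hh => hab (by rw [hh])))

/-- The induced map on the smaller Hanoi graph (forgetting disk 0). -/
def T {n : ℕ} (x₀ : Fin k) (g : hanoiGraph (n+1) k ≃g hanoiGraph (n+1) k)
    (u : Fin n → Fin k) : Fin n → Fin k :=
  Fin.tail (g (Fin.cons x₀ u))

lemma tail_indep (hk : 3 ≤ k) {n : ℕ} (x₀ : Fin k)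
    (g : hanoiGraph (n+1) k ≃g hanoiGraph (n+1) k) (v : Fin (n+1) → Fin k) :
    Fin.tail (g v) = T x₀ g (Fin.tail v) := by
  apply tail_eq_map hk g
  rw [Fin.tail_cons]

lemma T_adj (hk : 3 ≤ k) {n : ℕ} (x₀ : Fin k)
    (g : hanoiGraph (n+1) k ≃g hanoiGraph (n+1) k)
    (hinj : Function.Injective (T x₀ g))
    {u u' : Fin n → Fin k} (h : (hanoiGraph n k).Adj u u') :
    (hanoiGraph n k).Adj (T x₀ g u) (T x₀ g u') := by
  obtain ⟨d, h1, h2, h3⟩ := h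
  obtain ⟨x, hx1, hx2⟩ := exists_ne_ne hk (u d) (u' d)
  have hadj : (hanoiGraph (n+1) k).Adj (Fin.cons x u) (Fin.cons x u') := by
    refine ⟨d.succ, by simpa using h1, ?_, ?_⟩
    · intro i hi
      induction i using Fin.cases with
      | zero => simp
      | succ j => simpa using h2 j (fun hj => hi (by rw [hj]))
    · intro i hi
      induction i using Fin.cases with
      | zero => simpa using ⟨hx1, hx2⟩
      | succ j =>
        have hj : j < d := Fin.succ_lt_succ_iff.1 hi
        simpa using h3 j hj
  have hadj2 := g.map_rel_iff.2 hadj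
  have ht1 : Fin.tail (g (Fin.cons x u)) = T x₀ g u := by
    rw [tail_indep hk x₀ g, Fin.tail_cons]
  have ht2 : Fin.tail (g (Fin.cons x u')) = T x₀ g u' := by
    rw [tail_indep hk x₀ g, Fin.tail_cons]
  obtain ⟨e, k1, k2, k3⟩ := hadj2
  have he : e ≠ 0 := by
    rintro rfl
    have heq : T x₀ g u = T x₀ g u' := by
      rw [← ht1, ← ht2]
      funext j
      exact k2 j.succ (Fin.succ_ne_zero j)
    exact h1 (by rw [hinj heq])
  obtain ⟨f, rfl⟩ := Fin.eq_succ_of_ne_zero he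
  refine ⟨f, ?_, ?_, ?_⟩
  · rw [← ht1, ← ht2]; exact k1
  · intro i hi
    rw [← ht1, ← ht2]
    exact k2 i.succ (fun hh => hi (Fin.succ_injective _ hh))
  · intro i hi
    rw [← ht1, ← ht2]
    exact k3 i.succ (Fin.succ_lt_succ_iff.2 hi)

lemma step0 (g : hanoiGraph 1 k ≃g hanoiGraph 1 k)
    (hg : ∀ i : Fin k, g (fun _ => i) = fun _ => i) (v : Fin 1 → Fin k) : g v = v := by
  have hv : v = fun _ => v 0 := funext fun i => by rw [Subsingleton.elim i 0]
  rw [hv, hg]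

lemma step1 (hk : 3 ≤ k) {m : ℕ} (g : hanoiGraph (m+2) k ≃g hanoiGraph (m+2) k)
    (htail : ∀ w, Fin.tail (g w) = Fin.tail w) (v : Fin (m+2) → Fin k) : g v = v := by
  have hform : ∀ w : Fin (m+2) → Fin k, g w = Fin.cons (g w 0) (Fin.tail w) := by
    intro w
    funext i
    induction i using Fin.cases with
    | zero => simp
    | succ j =>
      rw [Fin.cons_succ]
      exact congrFun (htail w) j
  set u : Fin (m+1) → Fin k := Fin.tail v with hu
  set a : Fin k := u 0 with ha
  set σ : Fin k → Fin k := fun x => g (Fin.cons x u) 0 with hσ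
  have hgcons : ∀ x, g (Fin.cons x u) = Fin.cons (σ x) u := by
    intro x
    rw [hform (Fin.cons x u), Fin.tail_cons]
  have hσinj : Function.Injective σ := by
    intro x y hxy
    have h1 : g (Fin.cons x u) = g (Fin.cons y u) := by
      rw [hgcons, hgcons, hxy]
    have h2 := g.injective h1
    simpa using congrFun h2 0
  have hedge : ∀ b x : Fin k, b ≠ a → x ≠ a → x ≠ b → σ x ≠ a ∧ σ x ≠ b := by
    intro b x hba hxa hxb
    set u' : Fin (m+1) → Fin k := Function.update u 0 b with hu'
    have hadj : (hanoiGraph (m+2) k).Adj (Fin.cons x u) (Fin.cons x u') := by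
      refine ⟨(0 : Fin (m+1)).succ, ?_, ?_, ?_⟩
      · simpa [hu'] using fun hh => hba hh.symm
      · intro i hi
        induction i using Fin.cases with
        | zero => simp
        | succ j =>
          have hj : j ≠ 0 := fun hh => hi (by rw [hh])
          simp [hu', Function.update_of_ne hj]
      · intro i hi
        have hi0 : i = 0 := by
          rw [Fin.succ_zero_eq_one] at hi
          exact (Fin.lt_one_iff i).1 hi
        subst hi0
        simpa [hu'] using ⟨hxa, hxb⟩
    have hadj2 := g.map_rel_iff.2 hadj
    rw [hgcons x, hform (Fin.cons x u'), Fin.tail_cons] at hadj2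
    obtain ⟨e, k1, k2, k3⟩ := hadj2
    have he : e = (0 : Fin (m+1)).succ := by
      by_contra hne
      have h1 := k2 (0 : Fin (m+1)).succ (fun hh => hne hh.symm)
      simp [hu'] at h1
      exact hba h1.symm
    subst he
    have hk3 := k3 0 (Fin.succ_pos _)
    simpa [hu'] using hk3
  have hfix : ∀ x, x ≠ a → σ x = x := by
    intro x hxa
    obtain ⟨b₀, hb₀a, hb₀x⟩ := exists_ne_ne hk a x
    have h1 := hedge b₀ x hb₀a hxa (fun hh => hb₀x hh.symm)
    by_contra hxx
    exact (hedge (σ x) x h1.1 hxa (fun hh => hxx hh.symm)).2 rfl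
  have hσall : ∀ x, σ x = x := by
    intro x
    rcases eq_or_ne x a with rfl | hxa
    · by_contra hsa
      exact hsa (hσinj (hfix (σ a) hsa))
    · exact hfix x hxa
  calc g v = g (Fin.cons (v 0) u) := by rw [hu, Fin.cons_self_tail]
    _ = Fin.cons (σ (v 0)) u := hgcons _
    _ = Fin.cons (v 0) u := by rw [hσall]
    _ = v := by rw [hu, Fin.cons_self_tail]

lemma main (hk : 3 ≤ k) :
    ∀ n (g : hanoiGraph n k ≃g hanoiGraph n k),
      (∀ i : Fin k, g (fun _ => i) = fun _ => i) → ∀ v, g v = v := by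
  intro n
  induction n with
  | zero => intro g hg v; exact Subsingleton.elim _ _
  | succ n ih =>
    intro g hg v
    have hk0 : 0 < k := by omega
    set x₀ : Fin k := ⟨0, hk0⟩ with hx₀
    -- T g.symm is a left and right inverse of T g
    have hTT : ∀ (g' : hanoiGraph (n+1) k ≃g hanoiGraph (n+1) k) u,
        T x₀ g'.symm (T x₀ g' u) = u := by
      intro g' u
      have h1 := tail_indep hk x₀ g'.symm (g' (Fin.cons x₀ u))
      rw [RelIso.symm_apply_apply, Fin.tail_cons] at h1
      exact h1.symm
    have hTT2 : ∀ u, T x₀ g (T x₀ g.symm u) = u := by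
      intro u
      have h1 := tail_indep hk x₀ g (g.symm (Fin.cons x₀ u))
      rw [RelIso.apply_symm_apply, Fin.tail_cons] at h1
      exact h1.symm
    have hinj : Function.Injective (T x₀ g) :=
      Function.LeftInverse.injective (hTT g)
    have hinj' : Function.Injective (T x₀ g.symm) :=
      Function.LeftInverse.injective hTT2
    -- package T as an automorphism
    let Tiso : hanoiGraph n k ≃g hanoiGraph n k :=
      { toFun := T x₀ g
        invFun := T x₀ g.symm
        left_inv := hTT g
        right_inv := hTT2
        map_rel_iff' := by
          intro a b
          constructor
          · intro h
            have h' : (hanoiGraph n k).Adj (T x₀ g a) (T x₀ g b) := h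
            have h2 := T_adj hk x₀ g.symm hinj' h'
            rwa [hTT g, hTT g] at h2
          · exact T_adj hk x₀ g hinj }
    have hTperf : ∀ i : Fin k, Tiso (fun _ => i) = fun _ => i := by
      intro i
      have h1 := tail_indep hk x₀ g (fun _ => i)
      rw [hg i] at h1
      exact h1.symm
    have hTid : ∀ u, T x₀ g u = u := ih Tiso hTperf
    have htail : ∀ w, Fin.tail (g w) = Fin.tail w := by
      intro w
      rw [tail_indep hk x₀ g, hTid]
    have hform : ∀ w, g w = Fin.cons (g w 0) (Fin.tail w) := by
      intro w
      funext i
      induction i using Fin.cases with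
      | zero => simp
      | succ j =>
        rw [Fin.cons_succ]
        exact congrFun (htail w) j
    exact match n, g, hg, htail, v with
    | 0, g, hg, _, v => step0 g hg v
    | m+1, g, _, htail, v => step1 hk g htail v

end HanoiAux

/-- If an automorphism of the Tower of Hanoi graph `H_n^k` (k ≥ 3, n ≥ 1) fixes
every perfect state, then it is the identity automorphism. -/
theorem hanoi_aut_fixing_perfect_states_is_id (n k : ℕ) (hk : 3 ≤ k) (hn : 1 ≤ n)
    (g : hanoiGraph n k ≃g hanoiGraph n k)
    (hg : ∀ i : Fin k, g (fun _ => i) = fun _ => i) :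
    g = RelIso.refl _ := by
  exact RelIso.ext (HanoiAux.main hk n g hg)
end
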